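/- Let γ₀ and γ₁ be density operators on a finite-dimensional Hilbert space with γ₀ positive definite, and let O be a Hermitian operator. Define O_c = O − Tr(Oγ₀)·I and ξ = sign(Tr(Oγ₁) − Tr(Oγ₀)). Then for every s > 0, |Tr(γ₁O) − Tr(γ₀O)| ≤ (1/s)·[ln Tr(exp(ξ s O_c + ln γ₀)) + S(γ₁‖γ₀)], where S(γ₁‖γ₀) = Tr(γ₁ ln γ₁) − Tr(γ₁ ln γ₀) is the quantum relative entropy. -/

import Mathlib

open Matrix ComplexOrder

section QfriAux
variable {d : Type*} [Fintype d] [DecidableEq d]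


lemma star_mul_cancel_left (U : Matrix.unitaryGroup d ℂ) (x : Matrix d d ℂ) :
    star (U : Matrix d d ℂ) * ((U : Matrix d d ℂ) * x) = x := by
  rw [← mul_assoc, Unitary.coe_star_mul_self, one_mul]

lemma trace_cfc' (B : Matrix d d ℂ) (hB : B.IsHermitian) (g : ℝ → ℝ) :
    (cfc g B).trace = ((∑ j, g (hB.eigenvalues j) : ℝ) : ℂ) := by
  rw [hB.cfc_eq, Matrix.IsHermitian.cfc, Unitary.conjStarAlgAut_apply]
  rw [Matrix.trace_mul_cycle, Unitary.coe_star_mul_self, one_mul, trace_diagonal]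
  push_cast
  rfl

lemma trace_mul_cfc_self (A : Matrix d d ℂ) (hA : A.IsHermitian) (g : ℝ → ℝ) :
    (A * cfc g A).trace = ((∑ i, hA.eigenvalues i * g (hA.eigenvalues i) : ℝ) : ℂ) := by
  rw [hA.cfc_eq, Matrix.IsHermitian.cfc, Unitary.conjStarAlgAut_apply]
  nth_rewrite 1 [hA.spectral_theorem]
  simp only [Unitary.conjStarAlgAut_apply, mul_assoc]
  rw [star_mul_cancel_left]
  rw [Matrix.trace_mul_comm]
  simp only [mul_assoc]
  rw [Unitary.coe_star_mul_self, mul_one, diagonal_mul_diagonal, trace_diagonal]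
  push_cast
  rfl
lemma mul_star_cancel_left (U : Matrix.unitaryGroup d ℂ) (x : Matrix d d ℂ) :
    (U : Matrix d d ℂ) * (star (U : Matrix d d ℂ) * x) = x := by
  rw [← mul_assoc, (Matrix.mem_unitaryGroup_iff).mp U.2, one_mul]

lemma trace_mul_cfc_exists (A B : Matrix d d ℂ) (hA : A.IsHermitian) (hB : B.IsHermitian) :
    ∃ p : d → d → ℝ, (∀ i j, 0 ≤ p i j) ∧ (∀ i, ∑ j, p i j = 1) ∧ (∀ j, ∑ i, p i j = 1) ∧
      ∀ g : ℝ → ℝ, (A * cfc g B).trace =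
        ((∑ i, ∑ j, p i j * (hA.eigenvalues i * g (hB.eigenvalues j)) : ℝ) : ℂ) := by
  set U : Matrix d d ℂ := (hA.eigenvectorUnitary : Matrix d d ℂ) with hU
  set V : Matrix d d ℂ := (hB.eigenvectorUnitary : Matrix d d ℂ) with hV
  set W : Matrix d d ℂ := star U * V with hWdef
  have hW1 : W * star W = 1 := by
    rw [hWdef, StarMul.star_mul, star_star]
    simp only [mul_assoc]
    rw [mul_star_cancel_left hB.eigenvectorUnitary]
    exact Unitary.coe_star_mul_self hA.eigenvectorUnitary
  have hW2 : star W * W = 1 := by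
    rw [hWdef, StarMul.star_mul, star_star]
    simp only [mul_assoc]
    rw [mul_star_cancel_left hA.eigenvectorUnitary]
    exact Unitary.coe_star_mul_self hB.eigenvectorUnitary
  refine ⟨fun i j => Complex.normSq (W i j), fun i j => Complex.normSq_nonneg _, ?_, ?_, ?_⟩
  · intro i
    have h : (W * star W) i i = (1 : Matrix d d ℂ) i i := by rw [hW1]
    simp only [Matrix.mul_apply, Matrix.star_apply, Complex.star_def, Complex.mul_conj,
      Matrix.one_apply_eq] at h
    exact_mod_cast h
  · intro j
    have h : (star W * W) j j = (1 : Matrix d d ℂ) j j := by rw [hW2]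
    have hz : ∀ z : ℂ, star z * z = (Complex.normSq z : ℂ) := fun z => by
      rw [Complex.star_def, mul_comm, Complex.mul_conj]
    simp only [Matrix.mul_apply, Matrix.star_apply, hz, Matrix.one_apply_eq] at h
    exact_mod_cast h
  · intro g
    rw [hB.cfc_eq, Matrix.IsHermitian.cfc, Unitary.conjStarAlgAut_apply]
    nth_rewrite 1 [hA.spectral_theorem]
    rw [Unitary.conjStarAlgAut_apply]
    rw [← hU, ← hV]
    simp only [mul_assoc]
    rw [Matrix.trace_mul_comm]
    simp only [mul_assoc]
    have hsW : star W = star V * U := by rw [hWdef, StarMul.star_mul, star_star]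
    have hrw : diagonal (RCLike.ofReal ∘ hA.eigenvalues) *
        (star U * (V * (diagonal (RCLike.ofReal ∘ g ∘ hB.eigenvalues) * (star V * U)))) =
        diagonal (RCLike.ofReal ∘ hA.eigenvalues) *
        (W * (diagonal (RCLike.ofReal ∘ g ∘ hB.eigenvalues) * star W)) := by
      rw [hsW, hWdef]; simp only [mul_assoc]
    rw [hrw]
    -- now compute entrywise
    rw [Matrix.trace]
    push_cast
    refine Finset.sum_congr rfl fun i _ => ?_
    rw [Matrix.diag]
    rw [Matrix.diagonal_mul, Matrix.mul_apply]
    rw [Finset.mul_sum]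
    refine Finset.sum_congr rfl fun j _ => ?_
    rw [Matrix.mul_apply]
    simp only [Matrix.diagonal_apply, ite_mul, zero_mul, Finset.sum_ite_eq, Finset.mem_univ,
      if_true, Matrix.star_apply, Complex.star_def, Function.comp_apply]
    rw [show ∀ z w : ℂ, z * (W i j * (w * (starRingEnd ℂ) (W i j))) =
      (W i j * (starRingEnd ℂ) (W i j)) * (z * w) from fun z w => by ring, Complex.mul_conj]
    rfl


lemma klein_pt {x y : ℝ} (hx : 0 ≤ x) (hy : 0 < y) :
    x * Real.log y - x * Real.log x ≤ y - x := by
  rcases eq_or_lt_of_le hx with h | h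
  · simp [← h]; positivity
  · have h1 : Real.log (y / x) ≤ y / x - 1 := Real.log_le_sub_one_of_pos (by positivity)
    rw [Real.log_div (ne_of_gt hy) (ne_of_gt h)] at h1
    have := mul_le_mul_of_nonneg_left h1 hx
    rw [mul_sub, mul_sub, mul_div_cancel₀ _ (ne_of_gt h), mul_one] at this
    linarith

lemma gibbs (A M : Matrix d d ℂ) (hA : A.PosSemidef) (htr : A.trace = 1) (hM : M.IsHermitian) :
    ((A * M).trace).re ≤
      Real.log (((NormedSpace.exp M).trace).re) + ((A * cfc Real.log A).trace).re := by
  cases isEmpty_or_nonempty d with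
  | inl h => exfalso; simp [Matrix.trace] at htr
  | inr h =>
  set a := hA.1.eigenvalues with ha
  set b := hM.eigenvalues with hb
  have ha0 : ∀ i, 0 ≤ a i := hA.eigenvalues_nonneg
  have hsum_a : ∑ i, a i = 1 := by
    have h2 := trace_cfc' A hA.1 id
    have hid : cfc (id : ℝ → ℝ) A = A := cfc_id ℝ A hA.1
    rw [hid, htr] at h2
    exact_mod_cast h2.symm
  have hexp : NormedSpace.exp M = cfc Real.exp M := by
    letI : NormedRing (Matrix d d ℂ) := Matrix.linftyOpNormedRing
    letI : NormedAlgebra ℝ (Matrix d d ℂ) := Matrix.linftyOpNormedAlgebra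
    letI : NormedAlgebra ℂ (Matrix d d ℂ) := Matrix.linftyOpNormedAlgebra
    have h1 := @CFC.real_exp_eq_normedSpace_exp (Matrix d d ℂ) Matrix.linftyOpNormedRing _
      Matrix.linftyOpNormedAlgebra Matrix.IsHermitian.instContinuousFunctionalCalculus M hM
    exact h1.symm
  set Z := ∑ j, Real.exp (b j) with hZ
  have hZpos : 0 < Z := Finset.sum_pos (fun j _ => Real.exp_pos _) Finset.univ_nonempty
  have hZre : ((NormedSpace.exp M).trace).re = Z := by
    rw [hexp, trace_cfc' M hM, Complex.ofReal_re]
  obtain ⟨p, hp0, hrow, hcol, hform⟩ := trace_mul_cfc_exists A M hA.1 hM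
  have hAM : ((A * M).trace).re = ∑ i, ∑ j, p i j * (a i * b j) := by
    have h2 := hform id
    have hid : cfc (id : ℝ → ℝ) M = M := cfc_id ℝ M hM
    rw [hid] at h2
    rw [h2]
    simp [ha, hb]
  have hAlogA : ((A * cfc Real.log A).trace).re = ∑ i, a i * Real.log (a i) := by
    rw [trace_mul_cfc_self A hA.1]
    simp [ha]
  rw [hAM, hZre, hAlogA]
  have e1 : ∀ (c : d → ℝ), ∑ i, ∑ j, p i j * c i = ∑ i, c i := fun c =>
    Finset.sum_congr rfl (fun i _ => by rw [← Finset.sum_mul, hrow i, one_mul])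
  have e2 : ∀ (c : d → ℝ), ∑ i, ∑ j, p i j * c j = ∑ j, c j := fun c => by
    rw [Finset.sum_comm]
    exact Finset.sum_congr rfl fun j _ => by rw [← Finset.sum_mul, hcol j, one_mul]
  have key : ∀ i j, p i j * (a i * b j) ≤ p i j * (a i * Real.log (a i)) +
      (p i j * (Real.exp (b j) / Z) - p i j * (a i) + p i j * (a i * Real.log Z)) := by
    intro i j
    have hk := klein_pt (ha0 i) (show (0:ℝ) < Real.exp (b j) / Z by positivity)
    rw [Real.log_div (Real.exp_ne_zero _) (ne_of_gt hZpos), Real.log_exp] at hk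
    nlinarith [mul_le_mul_of_nonneg_left hk (hp0 i j)]
  calc ∑ i, ∑ j, p i j * (a i * b j)
      ≤ ∑ i, ∑ j, (p i j * (a i * Real.log (a i)) +
          (p i j * (Real.exp (b j) / Z) - p i j * (a i) + p i j * (a i * Real.log Z))) :=
        Finset.sum_le_sum fun i _ => Finset.sum_le_sum fun j _ => key i j
    _ = (∑ i, ∑ j, p i j * (a i * Real.log (a i))) + ((∑ i, ∑ j, p i j * (Real.exp (b j) / Z))
          - (∑ i, ∑ j, p i j * (a i)) + (∑ i, ∑ j, p i j * (a i * Real.log Z))) := by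
        simp [Finset.sum_add_distrib, Finset.sum_sub_distrib]
    _ = (∑ i, a i * Real.log (a i)) + ((∑ j, Real.exp (b j) / Z) - (∑ i, a i)
          + (∑ i, a i * Real.log Z)) := by
        rw [e1 (fun i => a i * Real.log (a i)), e2 (fun j => Real.exp (b j) / Z),
          e1 (fun i => a i), e1 (fun i => a i * Real.log Z)]
    _ = Real.log Z + ∑ i, a i * Real.log (a i) := by
        rw [← Finset.sum_div, ← hZ, div_self (ne_of_gt hZpos), hsum_a, ← Finset.sum_mul, hsum_a]
        ring

end QfriAux

lemma sign_mul_self' (x : ℝ) : Real.sign x * x = |x| := by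
  rcases lt_trichotomy x 0 with h | h | h
  · rw [Real.sign_of_neg h, abs_of_neg h]; ring
  · simp [h]
  · rw [Real.sign_of_pos h, abs_of_pos h]; ring

/-- Quantum fluctuation-response inequality (QFRI). -/
theorem qfri {d : Type*} [Fintype d] [DecidableEq d]
    (γ₀ γ₁ O : Matrix d d ℂ)
    (hγ₀ : γ₀.PosDef) (hγ₀tr : γ₀.trace = 1)
    (hγ₁ : γ₁.PosSemidef) (hγ₁tr : γ₁.trace = 1)
    (hO : O.IsHermitian)
    (Oc : Matrix d d ℂ) (hOc : Oc = O - ((O * γ₀).trace) • 1)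
    (ξ : ℝ) (hξ : ξ = Real.sign (((O * γ₁).trace).re - ((O * γ₀).trace).re))
    (s : ℝ) (hs : 0 < s) :
    |((γ₁ * O).trace).re - ((γ₀ * O).trace).re| ≤
      (1 / s) *
        (Real.log (((NormedSpace.exp ((((ξ * s : ℝ) : ℂ)) • Oc + cfc Real.log γ₀)).trace).re)
          + ((γ₁ * cfc Real.log γ₁).trace - (γ₁ * cfc Real.log γ₀).trace).re) := by
  set c : ℂ := (O * γ₀).trace with hc
  -- c is real
  have hcstar : star c = c := by
    rw [hc, ← Matrix.trace_conjTranspose, Matrix.conjTranspose_mul, hγ₀.1.eq, hO.eq,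
      Matrix.trace_mul_comm]
  have hcre : ((c.re : ℝ) : ℂ) = c := by
    rw [← Complex.conj_eq_iff_re]
    exact hcstar
  -- Oc Hermitian
  have hOch : Oc.IsHermitian := by
    rw [hOc]
    refine Matrix.IsHermitian.sub hO ?_
    unfold Matrix.IsHermitian
    rw [Matrix.conjTranspose_smul, Matrix.conjTranspose_one]
    rw [show star c = c from hcstar]
  -- M Hermitian
  set M : Matrix d d ℂ := (((ξ * s : ℝ) : ℂ)) • Oc + cfc Real.log γ₀ with hM
  have hMh : M.IsHermitian := by
    rw [hM]
    refine Matrix.IsHermitian.add ?_ (cfc_predicate Real.log γ₀)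
    unfold Matrix.IsHermitian
    rw [Matrix.conjTranspose_smul, Complex.star_def, Complex.conj_ofReal, hOch.eq]
  have h := gibbs γ₁ M hγ₁ hγ₁tr hMh
  -- expand (γ₁ * M).trace
  have hexpand : (γ₁ * M).trace = (((ξ * s : ℝ) : ℂ)) * ((γ₁ * O).trace - c)
      + (γ₁ * cfc Real.log γ₀).trace := by
    rw [hM, Matrix.mul_add, Matrix.trace_add, Matrix.mul_smul, Matrix.trace_smul, hOc,
      Matrix.mul_sub, Matrix.trace_sub, Matrix.mul_smul, Matrix.mul_one, Matrix.trace_smul,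
      hγ₁tr]
    simp [smul_eq_mul]
  set Δ : ℝ := ((γ₁ * O).trace).re - ((γ₀ * O).trace).re with hΔ
  have hγ₀O : ((γ₀ * O).trace).re = c.re := by rw [hc, Matrix.trace_mul_comm]
  have hre : ((γ₁ * M).trace).re = (ξ * s) * Δ + ((γ₁ * cfc Real.log γ₀).trace).re := by
    rw [hexpand, Complex.add_re, Complex.re_ofReal_mul, Complex.sub_re, hΔ, hγ₀O]
  have hξΔ : ξ * Δ = |Δ| := by
    rw [hξ, show ((O * γ₁).trace).re = ((γ₁ * O).trace).re from by rw [Matrix.trace_mul_comm],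
      show ((O * γ₀).trace).re = ((γ₀ * O).trace).re from by rw [Matrix.trace_mul_comm], ← hΔ]
    exact sign_mul_self' Δ
  rw [hre] at h
  have h2 : s * |Δ| ≤ Real.log (((NormedSpace.exp M).trace).re)
      + (((γ₁ * cfc Real.log γ₁).trace - (γ₁ * cfc Real.log γ₀).trace).re) := by
    rw [Complex.sub_re]
    have : (ξ * s) * Δ = s * |Δ| := by rw [mul_comm ξ s, mul_assoc, hξΔ]
    linarith [h, this.symm.le, this.le]
  calc |Δ| = (1/s) * (s * |Δ|) := by field_simp
    _ ≤ _ := mul_le_mul_of_nonneg_left h2 (by positivity)
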